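/- Two DAGs on the same vertex set are Markov equivalent (represent the same set of conditional independence statements under d-separation) if and only if they have the same skeleton and the same set of immoralities (v-structures). -/

import Mathlib

/-- Skeleton (undirected) adjacency of a directed graph. -/
def Skel {V : Type*} (E : V → V → Prop) (a b : V) : Prop := E a b ∨ E b a

/-- Directed reachability: `Reaches E a b` iff there is a directed path from `a` to `b`. -/
def Reaches {V : Type*} (E : V → V → Prop) : V → V → Prop := Relation.ReflTransGen E

/-- A directed graph is acyclic if no edge can be completed to a directed cycle. -/
def IsAcyclicD {V : Type*} (E : V → V → Prop) : Prop := ∀ a b : V, E a b → ¬ Reaches E b a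

/-- `(a, b, c)` is an immorality (v-structure): `a → b ← c` with `a, c` non-adjacent. -/
def Immorality {V : Type*} (E : V → V → Prop) (a b c : V) : Prop :=
  a ≠ c ∧ E a b ∧ E c b ∧ ¬ Skel E a c

/-- `p` is an (undirected) trail from `a` to `b` in the skeleton of `E`. -/
def IsTrail {V : Type*} (E : V → V → Prop) (a b : V) (p : List V) : Prop :=
  p.Chain' (Skel E) ∧ p.head? = some a ∧ p.getLast? = some b ∧ p.Nodup ∧ 2 ≤ p.length

/-- A consecutive triple `x - y - z` on a trail is blocked by `S`:
a collider `x → y ← z` blocks unless `y` has a descendant (possibly itself) in `S`;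
a non-collider blocks iff `y ∈ S`. -/
def BlockedTriple {V : Type*} (E : V → V → Prop) (S : Set V) (x y z : V) : Prop :=
  ((E x y ∧ E z y) ∧ ∀ d ∈ S, ¬ Reaches E y d) ∨ (¬ (E x y ∧ E z y) ∧ y ∈ S)

/-- A trail is blocked by `S` if some consecutive triple on it is blocked. -/
def BlockedTrail {V : Type*} (E : V → V → Prop) (S : Set V) (p : List V) : Prop :=
  ∃ l x y z r, p = l ++ x :: y :: z :: r ∧ BlockedTriple E S x y z

/-- d-separation: every trail between `A` and `B` is blocked by `S`. -/
def DSep {V : Type*} (E : V → V → Prop) (A B S : Set V) : Prop :=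
  ∀ a ∈ A, ∀ b ∈ B, ∀ p : List V, IsTrail E a b p → BlockedTrail E S p

/-- Markov equivalence: the same d-separations among disjoint sets. -/
def MarkovEquiv {V : Type*} (E₁ E₂ : V → V → Prop) : Prop :=
  ∀ A B S : Set V, Disjoint A B → Disjoint A S → Disjoint B S →
    (DSep E₁ A B S ↔ DSep E₂ A B S)

/-- The ancestral closure of `W`: all vertices with a directed path into `W`. -/
def AncSet {V : Type*} (E : V → V → Prop) (W : Set V) : Set V :=
  {v | ∃ w ∈ W, Reaches E v w}

/-- The subgraph induced on a vertex set. -/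
def InducedE {V : Type*} (E : V → V → Prop) (W : Set V) (a b : V) : Prop :=
  E a b ∧ a ∈ W ∧ b ∈ W

/-- Moral graph adjacency: skeleton edges plus marriages of common parents. -/
def Moral {V : Type*} (E : V → V → Prop) (a b : V) : Prop :=
  a ≠ b ∧ (E a b ∨ E b a ∨ ∃ c, E a c ∧ E b c)

/-- `p` is a path from `a` to `b` in the undirected graph `G`. -/
def UPath {V : Type*} (G : V → V → Prop) (a b : V) (p : List V) : Prop :=
  p.Chain' G ∧ p.head? = some a ∧ p.getLast? = some b ∧ p.Nodup

/-- Separation in an undirected graph: every path from `A` to `B` meets `S`. -/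
def USep {V : Type*} (G : V → V → Prop) (A B S : Set V) : Prop :=
  ∀ a ∈ A, ∀ b ∈ B, ∀ p : List V, UPath G a b p → ∃ s ∈ S, s ∈ p


open Classical List

section Toolkit

variable {V : Type*}

namespace VP

theorem no_self {E : V → V → Prop} (h : IsAcyclicD E) (a : V) : ¬ E a a :=
  fun he => h a a he Relation.ReflTransGen.refl

theorem no_two {E : V → V → Prop} (h : IsAcyclicD E) {a b : V} (hab : E a b) : ¬ E b a :=
  fun hba => h a b hab (Relation.ReflTransGen.single hba)

theorem Skel.symm {E : V → V → Prop} {a b : V} (h : Skel E a b) : Skel E b a := h.elim Or.inr Or.inl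

theorem skel_ne {E : V → V → Prop} (h : IsAcyclicD E) {a b : V} (hs : Skel E a b) : a ≠ b := by
  rintro rfl; exact hs.elim (no_self h a) (no_self h a)

theorem orient {E : V → V → Prop} {a b : V} (hs : Skel E a b) (hne : ¬ E a b) : E b a :=
  hs.resolve_left hne

theorem reaches_trans {E : V → V → Prop} {a b c : V} (h : Reaches E a b) (h' : Reaches E b c) :
    Reaches E a c := Relation.ReflTransGen.trans h h'

theorem reaches_head {E : V → V → Prop} {a b c : V} (h : E a b) (h' : Reaches E b c) :
    Reaches E a c := Relation.ReflTransGen.head h h'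

/-- Directed walks of a given length. -/
def WalkN (E : V → V → Prop) : ℕ → V → V → Prop
  | 0, a, b => a = b
  | (n+1), a, b => ∃ c, E a c ∧ WalkN E n c b

theorem WalkN.reaches {E : V → V → Prop} : ∀ {n : ℕ} {a b : V}, WalkN E n a b → Reaches E a b
  | 0, a, b, h => by rw [show a = b from h]; exact Relation.ReflTransGen.refl
  | (n+1), a, b, ⟨c, hac, hw⟩ => reaches_head hac (WalkN.reaches hw)

theorem reaches_walkN {E : V → V → Prop} {a b : V} (h : Reaches E a b) :
    ∃ n, WalkN E n a b := by
  induction h using Relation.ReflTransGen.head_induction_on with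
  | refl => exact ⟨0, rfl⟩
  | head hac _ ih => exact ⟨ih.choose + 1, _, hac, ih.choose_spec⟩

/-- The triple `x-y-z` is not blocked. -/
theorem not_blockedTriple_iff {E : V → V → Prop} {S : Set V} {x y z : V} :
    ¬ BlockedTriple E S x y z ↔
      ((E x y ∧ E z y) → ∃ d ∈ S, Reaches E y d) ∧ (¬ (E x y ∧ E z y) → y ∉ S) := by
  unfold BlockedTriple
  push_neg
  constructor
  · rintro ⟨h1, h2⟩
    exact ⟨h1, h2⟩
  · rintro ⟨h1, h2⟩
    exact ⟨h1, h2⟩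

/-- Index-based "every triple is active". -/
def Act (E : V → V → Prop) (S : Set V) (p : List V) : Prop :=
  ∀ i x y z, p[i]? = some x → p[i+1]? = some y → p[i+2]? = some z →
    ¬ BlockedTriple E S x y z

theorem triple_decomp {p : List V} {P : V → V → V → Prop} :
    (∃ l x y z r, p = l ++ x :: y :: z :: r ∧ P x y z) ↔
    (∃ i x y z, p[i]? = some x ∧ p[i+1]? = some y ∧ p[i+2]? = some z ∧ P x y z) := by
  constructor
  · rintro ⟨l, x, y, z, r, rfl, hP⟩
    refine ⟨l.length, x, y, z, ?_, ?_, ?_, hP⟩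
    · rw [List.getElem?_append_right le_rfl]; simp
    · rw [List.getElem?_append_right (by omega)]; simp
    · rw [List.getElem?_append_right (by omega)]
      simp [show l.length + 2 - l.length = 2 by omega]
  · rintro ⟨i, x, y, z, hx, hy, hz, hP⟩
    obtain ⟨hxl, hxe⟩ := List.getElem?_eq_some_iff.mp hx
    obtain ⟨hyl, hye⟩ := List.getElem?_eq_some_iff.mp hy
    obtain ⟨hzl, hze⟩ := List.getElem?_eq_some_iff.mp hz
    refine ⟨p.take i, x, y, z, p.drop (i+3), ?_, hP⟩
    have d0 := List.drop_eq_getElem_cons hxl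
    have d1 := List.drop_eq_getElem_cons hyl
    have d2 := List.drop_eq_getElem_cons hzl
    rw [hxe] at d0; rw [hye] at d1; rw [hze] at d2
    conv_lhs => rw [← List.take_append_drop i p]
    rw [d0, d1, d2]

theorem blockedTrail_iff_not_act {E : V → V → Prop} {S : Set V} {p : List V} :
    BlockedTrail E S p ↔ ¬ Act E S p := by
  unfold BlockedTrail Act
  rw [triple_decomp]
  constructor
  · rintro ⟨i, x, y, z, hx, hy, hz, hP⟩ h
    exact h i x y z hx hy hz hP
  · intro h
    by_contra hc
    push_neg at hc
    exact h fun i x y z hx hy hz hb => hc i x y z hx hy hz hb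

theorem chain'_getElem? {R : V → V → Prop} {p : List V} (h : p.Chain' R)
    {i : ℕ} {x y : V} (hx : p[i]? = some x) (hy : p[i+1]? = some y) : R x y := by
  obtain ⟨hxl, hxe⟩ := List.getElem?_eq_some_iff.mp hx
  obtain ⟨hyl, hye⟩ := List.getElem?_eq_some_iff.mp hy
  have := List.isChain_iff_getElem.mp h i (by omega)
  simpa [List.get_eq_getElem, hxe, hye] using this

theorem chain'_of_getElem? {R : V → V → Prop} {p : List V}
    (h : ∀ i x y, p[i]? = some x → p[i+1]? = some y → R x y) : p.Chain' R := by
  show p.IsChain R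
  rw [List.isChain_iff_getElem]
  intro i hi
  exact h i _ _ (List.getElem?_eq_getElem (by omega)) (List.getElem?_eq_getElem (by omega))

theorem head?_getElem? {p : List V} {a : V} (h : p.head? = some a) : p[0]? = some a := by
  rwa [← List.head?_eq_getElem?]

theorem getLast?_getElem? {p : List V} {b : V} (h : p.getLast? = some b) :
    p[p.length - 1]? = some b := by
  rwa [← List.getLast?_eq_getElem?]

theorem nodup_inj {p : List V} (h : p.Nodup) {i j : ℕ} {x : V}
    (hi : p[i]? = some x) (hj : p[j]? = some x) : i = j := by
  obtain ⟨hil, hie⟩ := List.getElem?_eq_some_iff.mp hi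
  obtain ⟨hjl, hje⟩ := List.getElem?_eq_some_iff.mp hj
  exact (List.Nodup.getElem_inj_iff h).mp (by rw [hie, hje])

end VP
end Toolkit

namespace VP
variable {V : Type*}

theorem anc_step {E : V → V → Prop} {W : Set V} {x y : V} (hxy : E x y)
    (hy : y ∈ AncSet E W) : x ∈ AncSet E W := by
  obtain ⟨w, hw, hr⟩ := hy
  exact ⟨w, hw, reaches_head hxy hr⟩

theorem nonadj_dsep {E : V → V → Prop} (h : IsAcyclicD E) {a b : V}
    (hab : a ≠ b) (hns : ¬ Skel E a b) :
    DSep E {a} {b} (AncSet E {a, b} \ {a, b}) := by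
  set S : Set V := AncSet E {a, b} \ {a, b} with hS
  intro a' ha' b' hb' p hp
  rw [Set.mem_singleton_iff] at ha' hb'
  rw [ha', hb'] at hp
  clear ha' hb'
  rw [blockedTrail_iff_not_act]
  intro hact
  obtain ⟨hchain, hh, hl, hnd, hlen⟩ := hp
  set n := p.length with hn
  have p0 : p[0]? = some a := head?_getElem? hh
  have plast : p[n-1]? = some b := getLast?_getElem? hl
  -- distance to S gives membership in AncSet {a,b}
  have hdS : ∀ y : V, (∃ d ∈ S, Reaches E y d) → y ∈ AncSet E {a, b} := by
    rintro y ⟨d, hd, hr⟩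
    obtain ⟨⟨w, hw, hrw⟩, -⟩ := hd
    exact ⟨w, hw, reaches_trans hr hrw⟩
  by_cases h2 : n = 2
  · have p1 : p[1]? = some b := by rw [← plast, h2]
    exact hns (chain'_getElem? hchain p0 p1)
  have h3 : 3 ≤ n := by omega
  -- rightward lemma
  have R : ∀ k i x y, n - i ≤ k → p[i]? = some x → p[i+1]? = some y → E x y →
      x ∈ AncSet E {a, b} := by
    intro k
    induction k with
    | zero =>
      intro i x y hk hx _ _
      have := (List.getElem?_eq_some_iff.mp hx).1
      omega
    | succ k ih =>
      intro i x y hk hx hy hxy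
      have hi1 : i + 1 < n := (List.getElem?_eq_some_iff.mp hy).1
      by_cases hend : i + 1 = n - 1
      · have hyb : y = b := by
          rw [hend] at hy; rw [hy] at plast; exact (Option.some_inj.mp plast)
        exact ⟨b, by simp, Relation.ReflTransGen.single (hyb ▸ hxy)⟩
      · have hi2 : i + 2 < n := by omega
        obtain ⟨z, hz⟩ : ∃ z, p[i+2]? = some z :=
          ⟨p[i+2]'(by omega), List.getElem?_eq_getElem (by omega)⟩
        have hskyz : Skel E y z := chain'_getElem? hchain hy hz
        by_cases hyz : E y z
        · exact anc_step hxy (ih (i+1) y z (by omega) hy hz hyz)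
        · have hzy : E z y := orient hskyz hyz
          have hblk := (not_blockedTriple_iff.mp (hact i x y z hx hy hz)).1 ⟨hxy, hzy⟩
          exact anc_step hxy (hdS y hblk)
  -- leftward lemma
  have L : ∀ k i x y, i ≤ k → p[i]? = some x → p[i+1]? = some y → E y x →
      y ∈ AncSet E {a, b} := by
    intro k
    induction k with
    | zero =>
      intro i x y hi hx hy hyx
      have h0 : i = 0 := by omega
      subst h0
      have hxa : x = a := Option.some_inj.mp (by rw [← hx, p0])
      exact ⟨a, by simp, Relation.ReflTransGen.single (hxa ▸ hyx)⟩
    | succ k ih =>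
      intro i x y hi hx hy hyx
      rcases Nat.eq_zero_or_pos i with h0 | h0
      · subst h0
        have hxa : x = a := Option.some_inj.mp (by rw [← hx, p0])
        exact ⟨a, by simp, Relation.ReflTransGen.single (hxa ▸ hyx)⟩
      · obtain ⟨w, hw⟩ : ∃ w, p[i-1]? = some w := by
          refine ⟨p[i-1]'(by have := (List.getElem?_eq_some_iff.mp hx).1; omega),
            List.getElem?_eq_getElem _⟩
        have hw1 : p[(i-1)+1]? = some x := by
          rw [show i - 1 + 1 = i by omega]; exact hx
        have hskwx : Skel E w x := chain'_getElem? hchain hw hw1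
        by_cases hxw : E x w
        · exact anc_step hyx (ih (i-1) w x (by omega) hw hw1 hxw)
        · have hwx : E w x := orient hskwx.symm hxw
          have hy2 : p[(i-1)+2]? = some y := by
            rw [show i - 1 + 2 = i + 1 by omega]; exact hy
          have hblk := (not_blockedTriple_iff.mp (hact (i-1) w x y hw hw1 hy2)).1 ⟨hwx, hyx⟩
          exact anc_step hyx (hdS x hblk)

  -- every internal vertex is in S
  have hinS : ∀ j x, 1 ≤ j → j + 1 ≤ n - 1 → p[j]? = some x → x ∈ S := by
    intro j x hj1 hj2 hx
    have hAnc : x ∈ AncSet E {a, b} := by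
      obtain ⟨w, hw⟩ : ∃ w, p[j-1]? = some w :=
        ⟨p[j-1]'(by have := (List.getElem?_eq_some_iff.mp hx).1; omega),
          List.getElem?_eq_getElem _⟩
      have hw1 : p[(j-1)+1]? = some x := by rw [show j - 1 + 1 = j by omega]; exact hx
      obtain ⟨z, hz⟩ : ∃ z, p[j+1]? = some z :=
        ⟨p[j+1]'(by omega), List.getElem?_eq_getElem _⟩
      have hskwx : Skel E w x := chain'_getElem? hchain hw hw1
      by_cases hxw : E x w
      · exact L n (j-1) w x (by omega) hw hw1 hxw
      · have hwx : E w x := orient hskwx.symm hxw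
        have hskxz : Skel E x z := chain'_getElem? hchain hx hz
        by_cases hxz : E x z
        · exact R n j x z (by omega) hx hz hxz
        · have hzx : E z x := orient hskxz hxz
          have hy2 : p[(j-1)+2]? = some z := by
            rw [show j - 1 + 2 = j + 1 by omega]; exact hz
          exact hdS x ((not_blockedTriple_iff.mp (hact (j-1) w x z hw hw1 hy2)).1 ⟨hwx, hzx⟩)
    refine ⟨hAnc, ?_⟩
    intro hmem
    rcases hmem with rfl | rfl
    · exact absurd (nodup_inj hnd hx p0) (by omega)
    · exact absurd (nodup_inj hnd hx plast) (by omega)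
  -- every internal vertex is a collider
  have hcoll : ∀ j x y z, 1 ≤ j → j + 1 ≤ n - 1 →
      p[j-1]? = some x → p[j]? = some y → p[j+1]? = some z → E x y ∧ E z y := by
    intro j x y z hj1 hj2 hx hy hz
    have hyS : y ∈ S := hinS j y hj1 hj2 hy
    have hy1 : p[(j-1)+1]? = some y := by rw [show j - 1 + 1 = j by omega]; exact hy
    have hz2 : p[(j-1)+2]? = some z := by rw [show j - 1 + 2 = j + 1 by omega]; exact hz
    have := (not_blockedTriple_iff.mp (hact (j-1) x y z hx hy1 hz2)).2
    by_contra hnc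
    exact this hnc hyS
  by_cases h4 : 4 ≤ n
  · obtain ⟨x0, hx0⟩ : ∃ w, p[0]? = some w := ⟨a, p0⟩
    obtain ⟨x1, hx1⟩ : ∃ w, p[1]? = some w := ⟨p[1]'(by omega), List.getElem?_eq_getElem _⟩
    obtain ⟨x2, hx2⟩ : ∃ w, p[2]? = some w := ⟨p[2]'(by omega), List.getElem?_eq_getElem _⟩
    obtain ⟨x3, hx3⟩ : ∃ w, p[3]? = some w := ⟨p[3]'(by omega), List.getElem?_eq_getElem _⟩
    have c1 := hcoll 1 x0 x1 x2 le_rfl (by omega) hx0 hx1 hx2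
    have c2 := hcoll 2 x1 x2 x3 (by omega) (by omega) hx1 hx2 hx3
    exact no_two h c1.2 c2.1
  · -- n = 3
    have hn3 : n = 3 := by omega
    obtain ⟨y, hy⟩ : ∃ w, p[1]? = some w := ⟨p[1]'(by omega), List.getElem?_eq_getElem _⟩
    have p2 : p[2]? = some b := by rw [← plast, hn3]
    have c := hcoll 1 a y b le_rfl (by omega) p0 hy p2
    have hblk := (not_blockedTriple_iff.mp (hact 0 a y b p0 hy p2)).1 c
    have hyAnc := hdS y hblk
    obtain ⟨w, hw, hr⟩ := hyAnc
    rcases hw with rfl | hw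
    · exact h w y c.1 hr
    · rw [Set.mem_singleton_iff] at hw
      subst hw
      exact h w y c.2 hr

end VP

namespace VP
variable {V : Type*}

theorem trail_pair {E : V → V → Prop} {a b : V} (hs : Skel E a b) (hab : a ≠ b) :
    IsTrail E a b [a, b] := by
  refine ⟨?_, rfl, rfl, by simp [hab], by simp⟩
  simp [List.Chain', List.isChain_cons_cons, hs]

theorem not_blocked_pair {E : V → V → Prop} {S : Set V} {a b : V} :
    ¬ BlockedTrail E S [a, b] := by
  rintro ⟨l, x, y, z, r, heq, -⟩
  have := congrArg List.length heq
  simp at this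
  omega

/-- From Markov equivalence, edges transfer: skeletons agree. -/
theorem skel_imp {E₁ E₂ : V → V → Prop} (h₁ : IsAcyclicD E₁) (h₂ : IsAcyclicD E₂)
    (me : MarkovEquiv E₁ E₂) {a b : V} (hs : Skel E₁ a b) : Skel E₂ a b := by
  by_contra hns
  have hab : a ≠ b := skel_ne h₁ hs
  have hd₂ := nonadj_dsep h₂ hab hns
  set S : Set V := AncSet E₂ {a, b} \ {a, b} with hS
  have dAB : Disjoint ({a} : Set V) {b} := by simp [Set.disjoint_singleton_left, hab]
  have dAS : Disjoint ({a} : Set V) S := by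
    simp [Set.disjoint_singleton_left, hS, Set.mem_diff]
  have dBS : Disjoint ({b} : Set V) S := by
    simp [Set.disjoint_singleton_left, hS, Set.mem_diff]
  have hd₁ : DSep E₁ {a} {b} S := (me {a} {b} S dAB dAS dBS).mpr hd₂
  exact not_blocked_pair (hd₁ a rfl b rfl [a, b] (trail_pair hs hab))

theorem markov_symm {E₁ E₂ : V → V → Prop} (me : MarkovEquiv E₁ E₂) : MarkovEquiv E₂ E₁ :=
  fun A B S d1 d2 d3 => (me A B S d1 d2 d3).symm

theorem imm_imp {E₁ E₂ : V → V → Prop} (h₁ : IsAcyclicD E₁) (h₂ : IsAcyclicD E₂)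
    (me : MarkovEquiv E₁ E₂) (hsk : ∀ a b, Skel E₁ a b ↔ Skel E₂ a b)
    {a b c : V} (him : Immorality E₁ a b c) : Immorality E₂ a b c := by
  obtain ⟨hac, hab, hcb, hns⟩ := him
  have hns₂ : ¬ Skel E₂ a c := fun hs => hns ((hsk a c).mpr hs)
  refine ⟨hac, ?_⟩
  by_contra hcon
  push_neg at hcon
  have hnc : ¬ (E₂ a b ∧ E₂ c b) := fun ⟨u, v⟩ => hns₂ (hcon u v)
  set S : Set V := AncSet E₁ {a, c} \ {a, c} with hS
  have hd₁ := nonadj_dsep h₁ hac hns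
  have dAB : Disjoint ({a} : Set V) {c} := by simp [Set.disjoint_singleton_left, hac]
  have dAS : Disjoint ({a} : Set V) S := by
    simp [Set.disjoint_singleton_left, hS, Set.mem_diff]
  have dBS : Disjoint ({c} : Set V) S := by
    simp [Set.disjoint_singleton_left, hS, Set.mem_diff]
  have hd₂ : DSep E₂ {a} {c} S := (me {a} {c} S dAB dAS dBS).mp hd₁
  have hab' : a ≠ b := fun he => no_self h₁ b (he ▸ hab)
  have hbc' : b ≠ c := fun he => no_self h₁ b (he ▸ hcb)
  have htr : IsTrail E₂ a c [a, b, c] := by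
    refine ⟨?_, rfl, rfl, by simp [hab', hbc', hac], by simp⟩
    have s1 : Skel E₂ a b := (hsk a b).mp (Or.inl hab)
    have s2 : Skel E₂ b c := ((hsk c b).mp (Or.inl hcb)).symm
    simp [List.Chain', List.isChain_cons_cons, s1, s2]
  have hblk := hd₂ a rfl c rfl [a, b, c] htr
  obtain ⟨l, x, y, z, r, heq, hbt⟩ := hblk
  have hlen := congrArg List.length heq
  simp at hlen
  have hl0 : l = [] := by
    cases l with
    | nil => rfl
    | cons e t => simp at hlen; omega
  subst hl0
  have hr0 : r = [] := by
    cases r with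
    | nil => rfl
    | cons e t => simp at hlen
  subst hr0
  simp at heq
  obtain ⟨e1, e2, e3⟩ := heq
  rw [← e1, ← e2, ← e3] at hbt
  rcases hbt with ⟨hcoll, -⟩ | ⟨-, hmem⟩
  · exact hnc hcoll
  · obtain ⟨⟨w, hw, hr⟩, hnot⟩ := hmem
    rcases hw with hwa | hwc
    · subst hwa
      exact h₁ w b hab hr
    · rw [Set.mem_singleton_iff] at hwc
      subst hwc
      exact h₁ w b hcb hr

end VP

namespace VP
variable {V : Type*}

/-- Set of lengths of directed walks from `y` into `S`. -/
def dSet (E : V → V → Prop) (S : Set V) (y : V) : Set ℕ := {n | ∃ s ∈ S, WalkN E n y s}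

/-- Distance from `y` to `S`. -/
noncomputable def dR (E : V → V → Prop) (S : Set V) (y : V) : ℕ := sInf (dSet E S y)

theorem dSet_nonempty_iff {E : V → V → Prop} {S : Set V} {y : V} :
    (dSet E S y).Nonempty ↔ ∃ s ∈ S, Reaches E y s := by
  constructor
  · rintro ⟨n, s, hs, hw⟩
    exact ⟨s, hs, hw.reaches⟩
  · rintro ⟨s, hs, hr⟩
    obtain ⟨n, hn⟩ := reaches_walkN hr
    exact ⟨n, s, hs, hn⟩

theorem dR_spec {E : V → V → Prop} {S : Set V} {y : V} (h : (dSet E S y).Nonempty) :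
    ∃ s ∈ S, WalkN E (dR E S y) y s := Nat.sInf_mem h

theorem dR_min {E : V → V → Prop} {S : Set V} {y : V} {m : ℕ} (h : m < dR E S y) :
    ¬ ∃ s ∈ S, WalkN E m y s := Nat.notMem_of_lt_sInf h

open Classical in
/-- Cost of the window starting at index `i`. -/
noncomputable def wAt (E : V → V → Prop) (S : Set V) (p : List V) (i : ℕ) : ℕ :=
  ((p[i]?).bind fun x => (p[i+1]?).bind fun y => (p[i+2]?).map fun z =>
    if E x y ∧ E z y then dR E S y else 0).getD 0

/-- Total collider cost of a trail. -/
noncomputable def cost (E : V → V → Prop) (S : Set V) (p : List V) : ℕ :=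
  ∑ i ∈ Finset.range p.length, wAt E S p i

theorem wAt_eq {E : V → V → Prop} {S : Set V} {p : List V} {i : ℕ} {x y z : V}
    (hx : p[i]? = some x) (hy : p[i+1]? = some y) (hz : p[i+2]? = some z) :
    wAt E S p i = if E x y ∧ E z y then dR E S y else 0 := by
  simp [wAt, hx, hy, hz]

theorem wAt_eq_zero {E : V → V → Prop} {S : Set V} {p : List V} {i : ℕ}
    (hz : p[i+2]? = none) : wAt E S p i = 0 := by
  cases hx : p[i]? <;> cases hy : p[i+1]? <;> simp [wAt, hx, hy, hz]


theorem wAt_congr {E : V → V → Prop} {S : Set V} {p q : List V} {m : ℕ}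
    (h0 : q[m]? = p[m]?) (h1 : q[m+1]? = p[m+1]?) (h2 : q[m+2]? = p[m+2]?) :
    wAt E S q m = wAt E S p m := by
  unfold wAt
  rw [h0, h1, h2]

section Descend

variable {E₁ E₂ : V → V → Prop} {S : Set V}
variable (h₁ : IsAcyclicD E₁) (h₂ : IsAcyclicD E₂)
variable (hsk : ∀ a b, Skel E₁ a b ↔ Skel E₂ a b)
variable (him : ∀ a b c, Immorality E₁ a b c ↔ Immorality E₂ a b c)

include h₁ h₂ hsk him in
theorem descend : ∀ (k : ℕ) (y : V), (∃ s ∈ S, WalkN E₁ (k+1) y s) →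
    (∀ j, j ≤ k → ¬ ∃ s ∈ S, WalkN E₁ j y s) →
    (∃ s ∈ S, Reaches E₂ y s) ∨
      ∃ d₁, E₁ y d₁ ∧ E₂ d₁ y ∧ (∃ s ∈ S, WalkN E₁ k d₁ s) ∧
        (∀ j, j < k → ¬ ∃ s ∈ S, WalkN E₁ j d₁ s) := by
  intro k
  induction k with
  | zero =>
    rintro y ⟨s, hs, d₁, hyd, hw0⟩
    intro _
    have hds : d₁ = s := hw0
    subst hds
    by_cases he : E₂ y d₁
    · exact Or.inl ⟨d₁, hs, Relation.ReflTransGen.single he⟩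
    · refine Or.inr ⟨d₁, hyd, orient ((hsk y d₁).mp (Or.inl hyd)) he, ⟨d₁, hs, rfl⟩, ?_⟩
      intro j hj
      omega
  | succ k ih =>
    rintro y ⟨s, hs, d₁, hyd₁, hw⟩ hmin
    have hmind₁ : ∀ j, j ≤ k → ¬ ∃ s' ∈ S, WalkN E₁ j d₁ s' := by
      rintro j hj ⟨s', hs', hw'⟩
      exact hmin (j+1) (by omega) ⟨s', hs', d₁, hyd₁, hw'⟩
    by_cases he : E₂ y d₁
    · rcases ih d₁ ⟨s, hs, hw⟩ hmind₁ with ⟨s', hs', hr⟩ | ⟨d₂, hd₁d₂, he₂, hwd₂, hmind₂⟩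
      · exact Or.inl ⟨s', hs', reaches_head he hr⟩
      · -- derive a contradiction
        exfalso
        obtain ⟨s', hs', hwk⟩ := hwd₂
        have hyne : y ≠ d₂ := by
          rintro rfl
          exact hmin k (by omega) ⟨s', hs', hwk⟩
        have hskyd₂ : Skel E₁ y d₂ := by
          by_contra hnsk
          have himm₂ : Immorality E₂ y d₁ d₂ :=
            ⟨hyne, he, he₂, fun hsk₂ => hnsk ((hsk y d₂).mpr hsk₂)⟩
          obtain ⟨-, -, hE₁d₂d₁, -⟩ := (him y d₁ d₂).mpr himm₂
          exact no_two h₁ hd₁d₂ hE₁d₂d₁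
        have hyd₂ : E₁ y d₂ := by
          by_cases hc : E₁ y d₂
          · exact hc
          · exfalso
            have hd₂y : E₁ d₂ y := orient hskyd₂ hc
            exact h₁ y d₁ hyd₁
              (reaches_head hd₁d₂ (Relation.ReflTransGen.single hd₂y))
        exact hmin (k+1) le_rfl ⟨s', hs', d₂, hyd₂, hwk⟩
    · exact Or.inr ⟨d₁, hyd₁, orient ((hsk y d₁).mp (Or.inl hyd₁)) he, ⟨s, hs, hw⟩,
        fun j hj => hmind₁ j (by omega)⟩

end Descend
end VP

namespace VP
variable {V : Type*}

section Surgery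
variable {E : V → V → Prop} {S : Set V}

theorem getElem?_cut {p : List V} {s t i : ℕ} (hs : s ≤ p.length) :
    (p.take s ++ p.drop t)[i]? = if i < s then p[i]? else p[t + (i - s)]? := by
  have hlt : (p.take s).length = s := by simp [List.length_take]; omega
  by_cases hi : i < s
  · rw [List.getElem?_append_left (by omega), List.getElem?_take, if_pos hi, if_pos hi]
  · rw [List.getElem?_append_right (by omega), if_neg hi, hlt, List.getElem?_drop]

theorem getElem?_ins {p : List V} {d : V} {s t i : ℕ} (hs : s ≤ p.length) :
    (p.take s ++ d :: p.drop t)[i]? =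
      if i < s then p[i]? else if i = s then some d else p[t + (i - s - 1)]? := by
  have hlt : (p.take s).length = s := by simp [List.length_take]; omega
  by_cases hi : i < s
  · rw [List.getElem?_append_left (by omega), List.getElem?_take, if_pos hi, if_pos hi]
  · rw [List.getElem?_append_right (by omega), if_neg hi, hlt]
    by_cases hieq : i = s
    · subst hieq
      rw [if_pos rfl]
      simp
    · rw [if_neg hieq]
      obtain ⟨m, hm⟩ : ∃ m, i - s = m + 1 := ⟨i - s - 1, by omega⟩
      rw [hm, List.getElem?_cons_succ, List.getElem?_drop]
      congr 1
      try omega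

theorem length_cut {p : List V} {s t : ℕ} (hs : s ≤ p.length) :
    (p.take s ++ p.drop t).length = s + (p.length - t) := by
  simp [List.length_take, List.length_drop]; omega

theorem length_ins {p : List V} {d : V} {s t : ℕ} (hs : s ≤ p.length) :
    (p.take s ++ d :: p.drop t).length = s + 1 + (p.length - t) := by
  simp [List.length_take, List.length_drop]; omega

theorem sublist_cut {p : List V} {s t : ℕ} (hst : s ≤ t) :
    (p.take s ++ p.drop t) <+ p := by
  have h1 : p.drop t <+ p.drop s := by
    have he : p.drop t = (p.drop s).drop (t - s) := by
      rw [List.drop_drop]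
      congr 1
      omega
    rw [he]
    exact List.drop_sublist _ _
  have := List.Sublist.append_left h1 (p.take s)
  rwa [List.take_append_drop] at this

theorem nodup_cut {p : List V} {s t : ℕ} (hst : s ≤ t) (hnd : p.Nodup) :
    (p.take s ++ p.drop t).Nodup := (sublist_cut hst).nodup hnd

theorem nodup_ins {p : List V} {d : V} {s t : ℕ} (hst : s ≤ t) (hnd : p.Nodup)
    (hd : d ∉ p) : (p.take s ++ d :: p.drop t).Nodup := by
  have h0 := nodup_cut hst hnd
  rw [List.nodup_append] at h0
  obtain ⟨h1, h2, h3⟩ := h0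
  rw [List.nodup_append]
  refine ⟨h1, ?_, ?_⟩
  · refine List.nodup_cons.mpr ⟨fun hmem => hd (List.Sublist.mem hmem (List.drop_sublist t p)), h2⟩
  · intro x hx1 y hx2
    rcases List.mem_cons.mp hx2 with rfl | hx2
    · exact fun he => hd (List.Sublist.mem (he ▸ hx1) (List.take_sublist s p))
    · exact h3 x hx1 y hx2

theorem head?_cut {p : List V} {s t : ℕ} (hs1 : 1 ≤ s) (hs : s ≤ p.length) :
    (p.take s ++ p.drop t).head? = p.head? := by
  rw [List.head?_eq_getElem?, List.head?_eq_getElem?, getElem?_cut hs, if_pos (by omega)]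

theorem head?_ins {p : List V} {d : V} {s t : ℕ} (hs1 : 1 ≤ s) (hs : s ≤ p.length) :
    (p.take s ++ d :: p.drop t).head? = p.head? := by
  rw [List.head?_eq_getElem?, List.head?_eq_getElem?, getElem?_ins hs, if_pos (by omega)]

theorem getLast?_cut {p : List V} {s t : ℕ} (hs1 : 1 ≤ s) (hst : s ≤ t) (ht : t < p.length) :
    (p.take s ++ p.drop t).getLast? = p.getLast? := by
  rw [List.getLast?_eq_getElem?, List.getLast?_eq_getElem?, length_cut (by omega),
    getElem?_cut (by omega), if_neg (by omega)]
  congr 1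
  omega

theorem getLast?_ins {p : List V} {d : V} {s t : ℕ} (hs1 : 1 ≤ s) (hst : s ≤ t)
    (ht : t < p.length) :
    (p.take s ++ d :: p.drop t).getLast? = p.getLast? := by
  rw [List.getLast?_eq_getElem?, List.getLast?_eq_getElem?, length_ins (by omega),
    getElem?_ins (by omega), if_neg (by omega), if_neg (by omega)]
  congr 1
  omega

/-- Chain transfer for cut lists. -/
theorem chain'_cut {R : V → V → Prop} {p : List V} {s t : ℕ} (hs1 : 1 ≤ s) (hst : s ≤ t)
    (ht : t < p.length) (hch : p.Chain' R)
    (hseam : ∀ u v, p[s-1]? = some u → p[t]? = some v → R u v) :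
    (p.take s ++ p.drop t).Chain' R := by
  apply chain'_of_getElem?
  intro i x y hx hy
  rw [getElem?_cut (by omega)] at hx hy
  by_cases hi1 : i + 1 < s
  · rw [if_pos (by omega)] at hx
    rw [if_pos hi1] at hy
    exact chain'_getElem? hch hx hy
  · by_cases hi : i < s
    · -- i = s - 1, i + 1 = s
      rw [if_pos hi] at hx
      rw [if_neg hi1, show i + 1 - s = 0 by omega, Nat.add_zero] at hy
      exact hseam x y (by rw [show s - 1 = i by omega]; exact hx) hy
    · rw [if_neg hi] at hx
      rw [if_neg (by omega)] at hy
      rw [show t + (i + 1 - s) = t + (i - s) + 1 by omega] at hy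
      exact chain'_getElem? hch hx hy

/-- Chain transfer for insert lists. -/
theorem chain'_ins {R : V → V → Prop} {p : List V} {d : V} {s t : ℕ} (hs1 : 1 ≤ s)
    (hst : s ≤ t) (ht : t < p.length) (hch : p.Chain' R)
    (hseam1 : ∀ u, p[s-1]? = some u → R u d)
    (hseam2 : ∀ v, p[t]? = some v → R d v) :
    (p.take s ++ d :: p.drop t).Chain' R := by
  apply chain'_of_getElem?
  intro i x y hx hy
  rw [getElem?_ins (by omega)] at hx hy
  by_cases hi1 : i + 1 < s
  · rw [if_pos (by omega)] at hx
    rw [if_pos hi1] at hy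
    exact chain'_getElem? hch hx hy
  · by_cases hi : i < s
    · -- i = s-1, i+1 = s
      rw [if_pos hi] at hx
      rw [if_neg hi1, if_pos (by omega)] at hy
      obtain rfl : d = y := Option.some_inj.mp hy
      exact hseam1 x (by rw [show s - 1 = i by omega]; exact hx)
    · by_cases hieq : i = s
      · rw [if_neg hi, if_pos hieq] at hx
        obtain rfl : d = x := Option.some_inj.mp hx
        rw [if_neg (by omega), if_neg (by omega), show i + 1 - s - 1 = 0 by omega,
          Nat.add_zero] at hy
        exact hseam2 y hy
      · rw [if_neg hi, if_neg hieq] at hx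
        rw [if_neg (by omega), if_neg (by omega)] at hy
        rw [show t + (i + 1 - s - 1) = t + (i - s - 1) + 1 by omega] at hy
        exact chain'_getElem? hch hx hy

/-- Activity transfer for cut lists: only the two seam windows need checking. -/
theorem act_cut {p : List V} {s t : ℕ} (hs1 : 1 ≤ s) (hst : s ≤ t)
    (ht : t < p.length) (hA : Act E S p)
    (h1 : ∀ u v w, 2 ≤ s → p[s-2]? = some u → p[s-1]? = some v → p[t]? = some w →
      ¬ BlockedTriple E S u v w)
    (h2 : ∀ u v w, p[s-1]? = some u → p[t]? = some v → p[t+1]? = some w →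
      ¬ BlockedTriple E S u v w) :
    Act E S (p.take s ++ p.drop t) := by
  intro i x y z hx hy hz
  rw [getElem?_cut (by omega)] at hx hy hz
  by_cases hc1 : i + 2 < s
  · rw [if_pos (by omega)] at hx
    rw [if_pos (by omega)] at hy
    rw [if_pos hc1] at hz
    exact hA i x y z hx hy hz
  · by_cases hc2 : i + 2 = s
    · rw [if_pos (by omega)] at hx
      rw [if_pos (by omega)] at hy
      rw [if_neg (by omega), show i + 2 - s = 0 by omega, Nat.add_zero] at hz
      exact h1 x y z (by omega) (by rw [show s - 2 = i by omega]; exact hx)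
        (by rw [show s - 1 = i + 1 by omega]; exact hy) hz
    · by_cases hc3 : i + 1 = s
      · rw [if_pos (by omega)] at hx
        rw [if_neg (by omega), show i + 1 - s = 0 by omega, Nat.add_zero] at hy
        rw [if_neg (by omega), show t + (i + 2 - s) = t + 1 by omega] at hz
        exact h2 x y z (by rw [show s - 1 = i by omega]; exact hx) hy hz
      · rw [if_neg (by omega)] at hx
        rw [if_neg (by omega), show t + (i + 1 - s) = t + (i - s) + 1 by omega] at hy
        rw [if_neg (by omega), show t + (i + 2 - s) = t + (i - s) + 2 by omega] at hz
        exact hA (t + (i - s)) x y z hx hy hz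

/-- Activity transfer for insert lists: three seam windows need checking. -/
theorem act_ins {p : List V} {d : V} {s t : ℕ} (hs1 : 1 ≤ s) (hst : s ≤ t)
    (ht : t < p.length) (hA : Act E S p)
    (h1 : ∀ u v, 2 ≤ s → p[s-2]? = some u → p[s-1]? = some v →
      ¬ BlockedTriple E S u v d)
    (h2 : ∀ u w, p[s-1]? = some u → p[t]? = some w → ¬ BlockedTriple E S u d w)
    (h3 : ∀ v w, p[t]? = some v → p[t+1]? = some w → ¬ BlockedTriple E S d v w) :
    Act E S (p.take s ++ d :: p.drop t) := by
  intro i x y z hx hy hz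
  rw [getElem?_ins (by omega)] at hx hy hz
  by_cases hc1 : i + 2 < s
  · rw [if_pos (by omega)] at hx
    rw [if_pos (by omega)] at hy
    rw [if_pos hc1] at hz
    exact hA i x y z hx hy hz
  · by_cases hc2 : i + 2 = s
    · rw [if_pos (by omega)] at hx
      rw [if_pos (by omega)] at hy
      rw [if_neg (by omega), if_pos (by omega)] at hz
      obtain rfl : d = z := Option.some_inj.mp hz
      exact h1 x y (by omega) (by rw [show s - 2 = i by omega]; exact hx)
        (by rw [show s - 1 = i + 1 by omega]; exact hy)
    · by_cases hc3 : i + 1 = s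
      · rw [if_pos (by omega)] at hx
        rw [if_neg (by omega), if_pos (by omega)] at hy
        obtain rfl : d = y := Option.some_inj.mp hy
        rw [if_neg (by omega), if_neg (by omega),
          show i + 2 - s - 1 = 0 by omega, Nat.add_zero] at hz
        exact h2 x z (by rw [show s - 1 = i by omega]; exact hx) hz
      · by_cases hc4 : i = s
        · rw [if_neg (by omega), if_pos hc4] at hx
          obtain rfl : d = x := Option.some_inj.mp hx
          rw [if_neg (by omega), if_neg (by omega),
            show i + 1 - s - 1 = 0 by omega, Nat.add_zero] at hy
          rw [if_neg (by omega), if_neg (by omega),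
            show t + (i + 2 - s - 1) = t + 1 by omega] at hz
          exact h3 y z hy hz
        · rw [if_neg (by omega), if_neg (by omega)] at hx
          rw [if_neg (by omega), if_neg (by omega),
            show t + (i + 1 - s - 1) = t + (i - s - 1) + 1 by omega] at hy
          rw [if_neg (by omega), if_neg (by omega),
            show t + (i + 2 - s - 1) = t + (i - s - 1) + 2 by omega] at hz
          exact hA (t + (i - s - 1)) x y z hx hy hz

end Surgery
end VP

namespace VP
variable {V : Type*}

theorem some_eq {α : Type*} {o : Option α} {u v : α} (h1 : o = some u) (h2 : o = some v) :
    u = v := Option.some_inj.mp (h1 ▸ h2)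

section Main

variable {E₁ E₂ : V → V → Prop} {S : Set V}

theorem trans_main (h₁ : IsAcyclicD E₁) (h₂ : IsAcyclicD E₂)
    (hsk : ∀ a b, Skel E₁ a b ↔ Skel E₂ a b)
    (him : ∀ a b c, Immorality E₁ a b c ↔ Immorality E₂ a b c) :
    ∀ (p : List V) (a b : V), IsTrail E₁ a b p → Act E₁ S p →
      ∃ q, IsTrail E₂ a b q ∧ Act E₂ S q := by
  suffices H : ∀ (n c : ℕ) (p : List V) (a b : V), p.length = n → cost E₁ S p = c →
      IsTrail E₁ a b p → Act E₁ S p → ∃ q, IsTrail E₂ a b q ∧ Act E₂ S q by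
    intro p a b htr hact
    exact H p.length (cost E₁ S p) p a b rfl rfl htr hact
  intro n
  induction n using Nat.strong_induction_on with
  | _ n ihn =>
  intro c
  induction c using Nat.strong_induction_on with
  | _ c ihc =>
  intro p a b hn hc htr hact
  obtain ⟨hchain, hh, hl, hnd, hlen⟩ := htr
  have hwin : ∀ m (x' y' z' : V), p[m]? = some x' → p[m+1]? = some y' → p[m+2]? = some z' →
      ((E₁ x' y' ∧ E₁ z' y') → ∃ d ∈ S, Reaches E₁ y' d) ∧
      (¬ (E₁ x' y' ∧ E₁ z' y') → y' ∉ S) :=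
    fun m x' y' z' hx hy hz => not_blockedTriple_iff.mp (hact m x' y' z' hx hy hz)
  have hex : ∀ m, m < n → ∃ u, p[m]? = some u := by
    intro m hm
    exact ⟨p[m]'(by omega), List.getElem?_eq_getElem (by omega)⟩
  have hskel : ∀ m (u v : V), p[m]? = some u → p[m+1]? = some v → Skel E₁ u v :=
    fun m u v hu hv => chain'_getElem? hchain hu hv
  have hidx : ∀ (m1 m2 : ℕ) (u : V), p[m1]? = some u → p[m2]? = some u → m1 = m2 :=
    fun m1 m2 u hu hv => nodup_inj hnd hu hv
  by_cases C1 : ∃ (i : ℕ) (x y z : V), p[i]? = some x ∧ p[i+1]? = some y ∧ p[i+2]? = some z ∧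
      E₁ x y ∧ E₁ z y ∧ Skel E₁ x z
  · -- CASE 1 : shielded collider, shortcut
    obtain ⟨i, x, y, z, hx, hy, hz, hxy, hzy, hsxz⟩ := C1
    have hzl : i + 2 < n := by
      have := (List.getElem?_eq_some_iff.mp hz).1; omega
    obtain ⟨d, hd, hrd⟩ := (hwin i x y z hx hy hz).1 ⟨hxy, hzy⟩
    set q := p.take (i+1) ++ p.drop (i+2) with hq
    have hs1 : 1 ≤ i + 1 := by omega
    have hst : i + 1 ≤ i + 2 := by omega
    have ht : i + 2 < p.length := by omega
    have htr' : IsTrail E₁ a b q := by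
      refine ⟨?_, ?_, ?_, ?_, ?_⟩
      · refine chain'_cut hs1 hst ht hchain ?_
        intro u v hu hv
        rw [show i + 1 - 1 = i from rfl] at hu
        rw [some_eq hu hx, some_eq hv hz]
        exact hsxz
      · rw [head?_cut hs1 (by omega)]; exact hh
      · rw [getLast?_cut hs1 hst ht]; exact hl
      · exact nodup_cut hst hnd
      · rw [length_cut (by omega)]; omega
    have hact' : Act E₁ S q := by
      refine act_cut hs1 hst ht hact ?_ ?_
      · -- window (u, x, z)
        intro u v w h2s hu hv hw
        rw [show i + 1 - 2 = i - 1 from rfl] at hu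
        rw [show i + 1 - 1 = i from rfl] at hv
        obtain rfl : x = v := some_eq hx hv
        obtain rfl : z = w := some_eq hz hw
        have hi1 : 1 ≤ i := by omega
        have hu' : p[(i-1)]? = some u := hu
        have hx' : p[(i-1)+1]? = some x := by rw [show i - 1 + 1 = i by omega]; exact hx
        have hy' : p[(i-1)+2]? = some y := by rw [show i - 1 + 2 = i + 1 by omega]; exact hy
        have hold := hwin (i-1) u x y hu' hx' hy'
        rw [not_blockedTriple_iff]
        constructor
        · intro _
          exact ⟨d, hd, reaches_head hxy hrd⟩
        · intro _
          exact hold.2 (fun hcol => no_two h₁ hxy hcol.2)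
      · -- window (x, z, w)
        intro u v w hu hv hw
        rw [show i + 1 - 1 = i from rfl] at hu
        obtain rfl : x = u := some_eq hx hu
        obtain rfl : z = v := some_eq hz hv
        have hold := hwin (i+1) y z w hy hz (by rw [show i + 1 + 2 = i + 3 by omega]; exact hw)
        rw [not_blockedTriple_iff]
        constructor
        · intro _
          exact ⟨d, hd, reaches_head hzy hrd⟩
        · intro _
          exact hold.2 (fun hcol => no_two h₁ hzy hcol.1)
    have hlq : q.length = n - 1 := by rw [length_cut (by omega)]; omega
    exact ihn (n-1) (by omega) (cost E₁ S q) q a b hlq rfl htr' hact'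
  by_cases C2 : ∃ (i : ℕ) (x y z : V), p[i]? = some x ∧ p[i+1]? = some y ∧ p[i+2]? = some z ∧
      ¬ (E₁ x y ∧ E₁ z y) ∧ Skel E₁ x z ∧ E₂ x y ∧ E₂ z y
  · -- CASE 2 : non-collider that is an E₂-collider, shielded, shortcut
    push_neg at C1
    obtain ⟨i, x, y, z, hx, hy, hz, hnc, hsxz, he2xy, he2zy⟩ := C2
    have hzl : i + 2 < n := by
      have := (List.getElem?_eq_some_iff.mp hz).1; omega
    have hskxy : Skel E₁ x y := hskel i x y hx hy
    have hskyz : Skel E₁ y z := hskel (i+1) y z hy hz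
    set q := p.take (i+1) ++ p.drop (i+2) with hq
    have hs1 : 1 ≤ i + 1 := by omega
    have hst : i + 1 ≤ i + 2 := by omega
    have ht : i + 2 < p.length := by omega
    have htr' : IsTrail E₁ a b q := by
      refine ⟨?_, ?_, ?_, ?_, ?_⟩
      · refine chain'_cut hs1 hst ht hchain ?_
        intro u v hu hv
        rw [show i + 1 - 1 = i from rfl] at hu
        rw [some_eq hu hx, some_eq hv hz]
        exact hsxz
      · rw [head?_cut hs1 (by omega)]; exact hh
      · rw [getLast?_cut hs1 hst ht]; exact hl
      · exact nodup_cut hst hnd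
      · rw [length_cut (by omega)]; omega
    have hact' : Act E₁ S q := by
      refine act_cut hs1 hst ht hact ?_ ?_
      · -- window (u, x, z)
        intro u v w h2s hu hv hw
        rw [show i + 1 - 2 = i - 1 from rfl] at hu
        rw [show i + 1 - 1 = i from rfl] at hv
        obtain rfl : x = v := some_eq hx hv
        obtain rfl : z = w := some_eq hz hw
        have hi1 : 1 ≤ i := by omega
        have hu' : p[(i-1)]? = some u := hu
        have hx' : p[(i-1)+1]? = some x := by rw [show i - 1 + 1 = i by omega]; exact hx
        have hy' : p[(i-1)+2]? = some y := by rw [show i - 1 + 2 = i + 1 by omega]; exact hy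
        have hold := hwin (i-1) u x y hu' hx' hy'
        -- if x were an old collider, we get a contradiction
        have hnoc : ¬ (E₁ u x ∧ E₁ y x) := by
          rintro ⟨hux, hyx⟩
          have huy : ¬ Skel E₁ u y := by
            intro hsuy
            exact C1 (i-1) u x y hu' hx' hy' hux hyx hsuy
          have huyne : u ≠ y := by
            intro he
            have := hidx (i-1) (i+1) u hu' (he ▸ hy)
            omega
          have himm : Immorality E₁ u x y := ⟨huyne, hux, hyx, huy⟩
          obtain ⟨-, -, he2yx, -⟩ := (him u x y).mp himm
          exact no_two h₂ he2xy he2yx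
        rw [not_blockedTriple_iff]
        constructor
        · rintro ⟨hux, hzx⟩
          exfalso
          have hxy1 : E₁ x y := by
            by_cases hcc : E₁ x y
            · exact hcc
            · exact absurd ⟨hux, orient hskxy hcc⟩ hnoc
          have hyz1 : E₁ y z := by
            by_cases hcc : E₁ y z
            · exact hcc
            · exact absurd ⟨hxy1, orient hskyz hcc⟩ hnc
          exact h₁ x y hxy1 (reaches_head hyz1 (Relation.ReflTransGen.single hzx))
        · intro _
          exact hold.2 hnoc
      · -- window (x, z, w)
        intro u v w hu hv hw
        rw [show i + 1 - 1 = i from rfl] at hu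
        obtain rfl : x = u := some_eq hx hu
        obtain rfl : z = v := some_eq hz hv
        have hw' : p[(i+1)+2]? = some w := by rw [show i + 1 + 2 = i + 3 by omega]; exact hw
        have hold := hwin (i+1) y z w hy hz hw'
        rw [not_blockedTriple_iff]
        constructor
        · rintro ⟨hxz, hwz⟩
          by_cases hyz : E₁ y z
          · exact hold.1 ⟨hyz, hwz⟩
          · exfalso
            have hzy1 : E₁ z y := orient hskyz hyz
            have hyx1 : E₁ y x := by
              by_cases hcc : E₁ x y
              · exact absurd ⟨hcc, hzy1⟩ hnc
              · exact orient hskxy hcc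
            exact h₁ x z hxz (reaches_head hzy1 (Relation.ReflTransGen.single hyx1))
        · intro _
          by_cases hcold : E₁ y z ∧ E₁ w z
          · exfalso
            have hyw : ¬ Skel E₁ y w := by
              intro hsyw
              exact C1 (i+1) y z w hy hz hw' hcold.1 hcold.2 hsyw
            have hywne : y ≠ w := by
              intro he
              have := hidx (i+1) (i+3) y hy (he ▸ hw)
              omega
            have himm : Immorality E₁ y z w := ⟨hywne, hcold.1, hcold.2, hyw⟩
            obtain ⟨-, he2yz, -, -⟩ := (him y z w).mp himm
            exact no_two h₂ he2yz he2zy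
          · exact hold.2 hcold
    have hlq : q.length = n - 1 := by rw [length_cut (by omega)]; omega
    exact ihn (n-1) (by omega) (cost E₁ S q) q a b hlq rfl htr' hact'

  by_cases C3 : ∃ (i : ℕ) (x y z : V), p[i]? = some x ∧ p[i+1]? = some y ∧ p[i+2]? = some z ∧
      E₁ x y ∧ E₁ z y ∧ ¬ ∃ s ∈ S, Reaches E₂ y s
  · -- CASE 3 : collider with no E₂-descendant in S: reroute via a child
    push_neg at C1
    obtain ⟨i, x, y, z, hx, hy, hz, hxy, hzy, hnr⟩ := C3
    have hzl : i + 2 < n := by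
      have := (List.getElem?_eq_some_iff.mp hz).1; omega
    have hxnez : x ≠ z := by
      intro he
      have := hidx i (i+2) x hx (he ▸ hz)
      omega
    have hnsxz : ¬ Skel E₁ x z := fun h => C1 i x y z hx hy hz hxy hzy h
    obtain ⟨-, he2xy, he2zy, -⟩ := (him x y z).mp ⟨hxnez, hxy, hzy, hnsxz⟩
    obtain ⟨d0, hd0, hrd0⟩ := (hwin i x y z hx hy hz).1 ⟨hxy, hzy⟩
    have hne : (dSet E₁ S y).Nonempty := dSet_nonempty_iff.mpr ⟨d0, hd0, hrd0⟩
    obtain ⟨s0, hs0, hw0⟩ := dR_spec hne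
    have hk1 : 1 ≤ dR E₁ S y := by
      rcases Nat.eq_zero_or_pos (dR E₁ S y) with h0 | h0
      · exfalso
        rw [h0] at hw0
        have : y = s0 := hw0
        exact hnr ⟨s0, hs0, this ▸ Relation.ReflTransGen.refl⟩
      · exact h0
    set k := dR E₁ S y with hkdef
    have hdesc := descend h₁ h₂ hsk him (k-1) y
      (by rw [show k - 1 + 1 = k by omega]; exact ⟨s0, hs0, hw0⟩)
      (by
        intro j hj
        exact dR_min (by omega))
    rcases hdesc with hleft | ⟨d₁, hyd₁, he2d₁y, hwd₁, -⟩
    · exact absurd hleft hnr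
    have hd₁y : d₁ ≠ y := fun he => no_self h₁ y (he ▸ hyd₁)
    have hd₁x : d₁ ≠ x := fun he => no_two h₁ hxy (by rw [← he]; exact hyd₁)
    have hd₁z : d₁ ≠ z := fun he => no_two h₁ hzy (by rw [← he]; exact hyd₁)
    have hskxd₁ : Skel E₁ x d₁ := by
      by_contra hnsk
      have himm₂ : Immorality E₂ x y d₁ :=
        ⟨fun he => hd₁x he.symm, he2xy, he2d₁y, fun h2 => hnsk ((hsk x d₁).mpr h2)⟩
      obtain ⟨-, -, hE₁d₁y, -⟩ := (him x y d₁).mpr himm₂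
      exact no_two h₁ hyd₁ hE₁d₁y
    have hxd₁ : E₁ x d₁ := by
      by_cases hc : E₁ x d₁
      · exact hc
      · exfalso
        exact h₁ x y hxy
          (reaches_head hyd₁ (Relation.ReflTransGen.single (orient hskxd₁ hc)))
    have hskzd₁ : Skel E₁ z d₁ := by
      by_contra hnsk
      have himm₂ : Immorality E₂ z y d₁ :=
        ⟨fun he => hd₁z he.symm, he2zy, he2d₁y, fun h2 => hnsk ((hsk z d₁).mpr h2)⟩
      obtain ⟨-, -, hE₁d₁y, -⟩ := (him z y d₁).mpr himm₂
      exact no_two h₁ hyd₁ hE₁d₁y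
    have hzd₁ : E₁ z d₁ := by
      by_cases hc : E₁ z d₁
      · exact hc
      · exfalso
        exact h₁ z y hzy
          (reaches_head hyd₁ (Relation.ReflTransGen.single (orient hskzd₁ hc)))
    obtain ⟨s1, hs1, hw1⟩ := hwd₁
    have hde : ∃ s ∈ S, Reaches E₁ d₁ s := ⟨s1, hs1, hw1.reaches⟩
    have hdRd₁ : dR E₁ S d₁ ≤ k - 1 := Nat.sInf_le ⟨s1, hs1, hw1⟩
    by_cases hmem : d₁ ∈ p
    · -- 3b : d₁ already on the trail; cut to it
      obtain ⟨j, hj⟩ := List.mem_iff_getElem?.mp hmem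
      have hjl : j < n := by
        have := (List.getElem?_eq_some_iff.mp hj).1; omega
      have hjne1 : j ≠ i := fun he => hd₁x (some_eq hj (he ▸ hx))
      have hjne2 : j ≠ i + 1 := fun he => hd₁y (some_eq hj (he ▸ hy))
      have hjne3 : j ≠ i + 2 := fun he => hd₁z (some_eq hj (he ▸ hz))
      rcases (by omega : j < i ∨ i + 3 ≤ j) with hji | hji
      · -- d₁ occurs on the left of the collider
        set q := p.take (j+1) ++ p.drop (i+2) with hq
        have hs1' : 1 ≤ j + 1 := by omega
        have hst : j + 1 ≤ i + 2 := by omega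
        have ht : i + 2 < p.length := by omega
        have htr' : IsTrail E₁ a b q := by
          refine ⟨?_, ?_, ?_, ?_, ?_⟩
          · refine chain'_cut hs1' hst ht hchain ?_
            intro u v hu hv
            rw [show j + 1 - 1 = j from rfl] at hu
            rw [some_eq hu hj, some_eq hv hz]
            exact Or.inr hzd₁
          · rw [head?_cut hs1' (by omega)]; exact hh
          · rw [getLast?_cut hs1' hst ht]; exact hl
          · exact nodup_cut hst hnd
          · rw [length_cut (by omega)]; omega
        have hact' : Act E₁ S q := by
          refine act_cut hs1' hst ht hact ?_ ?_
          · -- window (u, d₁, z)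
            intro u v w h2s hu hv hw
            rw [show j + 1 - 2 = j - 1 from rfl] at hu
            rw [show j + 1 - 1 = j from rfl] at hv
            obtain rfl : d₁ = v := some_eq hj hv
            obtain rfl : z = w := some_eq hz hw
            rw [not_blockedTriple_iff]
            constructor
            · intro _
              exact hde
            · intro hnp
              have hnud₁ : ¬ E₁ u d₁ := fun hud₁ => hnp ⟨hud₁, hzd₁⟩
              obtain ⟨w0, hw0'⟩ := hex (j+1) (by omega)
              have hu' : p[(j-1)]? = some u := hu
              have hj' : p[(j-1)+1]? = some d₁ := by rw [show j-1+1 = j by omega]; exact hj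
              have hw0'' : p[(j-1)+2]? = some w0 := by rw [show j-1+2 = j+1 by omega]; exact hw0'
              exact (hwin (j-1) u d₁ w0 hu' hj' hw0'').2 (fun hcc => hnud₁ hcc.1)
          · -- window (d₁, z, w)
            intro u v w hu hv hw
            rw [show j + 1 - 1 = j from rfl] at hu
            obtain rfl : d₁ = u := some_eq hj hu
            obtain rfl : z = v := some_eq hz hv
            rw [not_blockedTriple_iff]
            constructor
            · rintro ⟨hdz, -⟩
              exact absurd hdz (no_two h₁ hzd₁)
            · intro _
              have hw' : p[(i+1)+2]? = some w := by rw [show i+1+2 = i+3 by omega]; exact hw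
              exact (hwin (i+1) y z w hy hz hw').2 (fun hcc => no_two h₁ hzy hcc.1)
        have hlq : q.length = j + 1 + (n - (i+2)) := by rw [length_cut (by omega)]; omega
        exact ihn (j + 1 + (n - (i+2))) (by omega) (cost E₁ S q) q a b hlq rfl htr' hact'
      · -- d₁ occurs on the right of the collider
        set q := p.take (i+1) ++ p.drop j with hq
        have hs1' : 1 ≤ i + 1 := by omega
        have hst : i + 1 ≤ j := by omega
        have ht : j < p.length := by omega
        have htr' : IsTrail E₁ a b q := by
          refine ⟨?_, ?_, ?_, ?_, ?_⟩
          · refine chain'_cut hs1' hst ht hchain ?_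
            intro u v hu hv
            rw [show i + 1 - 1 = i from rfl] at hu
            rw [some_eq hu hx, some_eq hv hj]
            exact Or.inl hxd₁
          · rw [head?_cut hs1' (by omega)]; exact hh
          · rw [getLast?_cut hs1' hst ht]; exact hl
          · exact nodup_cut hst hnd
          · rw [length_cut (by omega)]; omega
        have hact' : Act E₁ S q := by
          refine act_cut hs1' hst ht hact ?_ ?_
          · -- window (u, x, d₁)
            intro u v w h2s hu hv hw
            rw [show i + 1 - 2 = i - 1 from rfl] at hu
            rw [show i + 1 - 1 = i from rfl] at hv
            obtain rfl : x = v := some_eq hx hv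
            obtain rfl : d₁ = w := some_eq hj hw
            rw [not_blockedTriple_iff]
            constructor
            · rintro ⟨-, hd₁x'⟩
              exact absurd hd₁x' (no_two h₁ hxd₁)
            · intro _
              have hu' : p[(i-1)]? = some u := hu
              have hx' : p[(i-1)+1]? = some x := by rw [show i-1+1 = i by omega]; exact hx
              have hy' : p[(i-1)+2]? = some y := by rw [show i-1+2 = i+1 by omega]; exact hy
              exact (hwin (i-1) u x y hu' hx' hy').2 (fun hcc => no_two h₁ hxy hcc.2)
          · -- window (x, d₁, w)
            intro u v w hu hv hw
            rw [show i + 1 - 1 = i from rfl] at hu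
            obtain rfl : x = u := some_eq hx hu
            obtain rfl : d₁ = v := some_eq hj hv
            rw [not_blockedTriple_iff]
            constructor
            · intro _
              exact hde
            · intro hnp
              have hnwd₁ : ¬ E₁ w d₁ := fun hwd => hnp ⟨hxd₁, hwd⟩
              obtain ⟨u0, hu0⟩ := hex (j-1) (by omega)
              have hj' : p[(j-1)+1]? = some d₁ := by rw [show j-1+1 = j by omega]; exact hj
              have hw' : p[(j-1)+2]? = some w := by rw [show j-1+2 = j+1 by omega]; exact hw
              exact (hwin (j-1) u0 d₁ w hu0 hj' hw').2 (fun hcc => hnwd₁ hcc.2)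
        have hlq : q.length = i + 1 + (n - j) := by rw [length_cut (by omega)]; omega
        exact ihn (i + 1 + (n - j)) (by omega) (cost E₁ S q) q a b hlq rfl htr' hact'
    · -- 3a : d₁ not on the trail; replace y by d₁
      set q := p.take (i+1) ++ d₁ :: p.drop (i+2) with hq
      have hs1' : 1 ≤ i + 1 := by omega
      have hst : i + 1 ≤ i + 2 := by omega
      have ht : i + 2 < p.length := by omega
      have htr' : IsTrail E₁ a b q := by
        refine ⟨?_, ?_, ?_, ?_, ?_⟩
        · refine chain'_ins hs1' hst ht hchain ?_ ?_
          · intro u hu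
            rw [show i + 1 - 1 = i from rfl] at hu
            rw [some_eq hu hx]
            exact Or.inl hxd₁
          · intro v hv
            rw [some_eq hv hz]
            exact Or.inr hzd₁
        · rw [head?_ins hs1' (by omega)]; exact hh
        · rw [getLast?_ins hs1' hst ht]; exact hl
        · exact nodup_ins hst hnd hmem
        · rw [length_ins (by omega)]; omega
      have hact' : Act E₁ S q := by
        refine act_ins hs1' hst ht hact ?_ ?_ ?_
        · -- window (u, x, d₁)
          intro u v h2s hu hv
          rw [show i + 1 - 2 = i - 1 from rfl] at hu
          rw [show i + 1 - 1 = i from rfl] at hv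
          obtain rfl : x = v := some_eq hx hv
          rw [not_blockedTriple_iff]
          constructor
          · rintro ⟨-, hd₁x'⟩
            exact absurd hd₁x' (no_two h₁ hxd₁)
          · intro _
            have hu' : p[(i-1)]? = some u := hu
            have hx' : p[(i-1)+1]? = some x := by rw [show i-1+1 = i by omega]; exact hx
            have hy' : p[(i-1)+2]? = some y := by rw [show i-1+2 = i+1 by omega]; exact hy
            exact (hwin (i-1) u x y hu' hx' hy').2 (fun hcc => no_two h₁ hxy hcc.2)
        · -- window (x, d₁, z)
          intro u w hu hw
          rw [show i + 1 - 1 = i from rfl] at hu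
          obtain rfl : x = u := some_eq hx hu
          obtain rfl : z = w := some_eq hz hw
          rw [not_blockedTriple_iff]
          constructor
          · intro _
            exact hde
          · intro hnp
            exact absurd ⟨hxd₁, hzd₁⟩ hnp
        · -- window (d₁, z, w)
          intro v w hv hw
          obtain rfl : z = v := some_eq hz hv
          rw [not_blockedTriple_iff]
          constructor
          · rintro ⟨hdz, -⟩
            exact absurd hdz (no_two h₁ hzd₁)
          · intro _
            have hw' : p[(i+1)+2]? = some w := by rw [show i+1+2 = i+3 by omega]; exact hw
            exact (hwin (i+1) y z w hy hz hw').2 (fun hcc => no_two h₁ hzy hcc.1)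
      have hlq : q.length = n := by rw [length_ins (by omega)]; omega
      have hqget : ∀ m, q[m]? = if m = i + 1 then some d₁ else p[m]? := by
        intro m
        rw [hq, getElem?_ins (by omega)]
        by_cases hm1 : m < i + 1
        · rw [if_pos hm1, if_neg (by omega)]
        · by_cases hm2 : m = i + 1
          · rw [if_neg hm1, if_pos hm2, if_pos hm2]
          · rw [if_neg hm1, if_neg hm2, if_neg hm2,
              show i + 2 + (m - (i+1) - 1) = m by omega]
      have hcost : cost E₁ S q < cost E₁ S p := by
        unfold cost
        rw [hlq, ← hn]
        apply Finset.sum_lt_sum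
        · intro m hm
          by_cases hm0 : m + 2 < i + 1 ∨ i + 1 < m
          · -- window untouched
            have e0 : q[m]? = p[m]? := by rw [hqget]; rw [if_neg (by omega)]
            have e1 : q[m+1]? = p[m+1]? := by rw [hqget]; rw [if_neg (by omega)]
            have e2 : q[m+2]? = p[m+2]? := by rw [hqget]; rw [if_neg (by omega)]
            rw [wAt_congr e0 e1 e2]
          · push_neg at hm0
            rcases (by omega : m + 2 = i + 1 ∨ m + 1 = i + 1 ∨ m = i + 1) with hc | hc | hc
            · -- window (u, x, d₁): both sides are 0 on the left
              obtain ⟨u, hu⟩ := hex m (by omega)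
              have e0 : q[m]? = some u := by rw [hqget, if_neg (by omega)]; exact hu
              have e1 : q[m+1]? = some x := by
                rw [hqget, if_neg (by omega), show m + 1 = i by omega]; exact hx
              have e2 : q[m+2]? = some d₁ := by rw [hqget, if_pos hc]
              rw [wAt_eq e0 e1 e2, if_neg (fun hcc => no_two h₁ hxd₁ hcc.2)]
              omega
            · -- window (x, d₁, z)
              have e0 : q[m]? = some x := by
                rw [hqget, if_neg (by omega), show m = i by omega]; exact hx
              have e1 : q[m+1]? = some d₁ := by rw [hqget, if_pos hc]
              have e2 : q[m+2]? = some z := by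
                rw [hqget, if_neg (by omega), show m + 2 = i + 2 by omega]; exact hz
              have f0 : p[m]? = some x := by rw [show m = i by omega]; exact hx
              have f1 : p[m+1]? = some y := by rw [show m + 1 = i + 1 by omega]; exact hy
              have f2 : p[m+2]? = some z := by rw [show m + 2 = i + 2 by omega]; exact hz
              rw [wAt_eq e0 e1 e2, wAt_eq f0 f1 f2, if_pos ⟨hxd₁, hzd₁⟩, if_pos ⟨hxy, hzy⟩]
              omega
            · -- window (d₁, z, w)
              have e0 : q[m]? = some d₁ := by rw [hqget, if_pos hc]
              have e1 : q[m+1]? = some z := by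
                rw [hqget, if_neg (by omega), show m + 1 = i + 2 by omega]; exact hz
              cases hw : p[m+2]? with
              | none =>
                have e2 : q[m+2]? = none := by rw [hqget, if_neg (by omega)]; exact hw
                rw [wAt_eq_zero e2]
                omega
              | some w =>
                have e2 : q[m+2]? = some w := by rw [hqget, if_neg (by omega)]; exact hw
                rw [wAt_eq e0 e1 e2, if_neg (fun hcc => no_two h₁ hzd₁ hcc.1)]
                omega
        · refine ⟨i, Finset.mem_range.mpr (by omega), ?_⟩
          have e0 : q[i]? = some x := by rw [hqget, if_neg (by omega)]; exact hx
          have e1 : q[i+1]? = some d₁ := by rw [hqget, if_pos rfl]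
          have e2 : q[i+2]? = some z := by rw [hqget, if_neg (by omega)]; exact hz
          rw [wAt_eq e0 e1 e2, wAt_eq hx hy hz, if_pos ⟨hxd₁, hzd₁⟩, if_pos ⟨hxy, hzy⟩]
          omega
      rw [hc] at hcost
      exact ihc (cost E₁ S q) hcost q a b (by omega) rfl htr' hact'
  · -- CASE 4 : the trail itself is active in E₂
    push_neg at C1 C2 C3
    refine ⟨p, ⟨List.IsChain.imp (fun ⦃u v⦄ h => (hsk u v).mp h) hchain, hh, hl, hnd, hlen⟩, ?_⟩
    intro i x y z hx hy hz
    rw [not_blockedTriple_iff]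
    constructor
    · rintro ⟨he2xy', he2zy'⟩
      by_cases hc1 : E₁ x y ∧ E₁ z y
      · exact C3 i x y z hx hy hz hc1.1 hc1.2
      · by_cases hs2 : Skel E₁ x z
        · exact absurd he2zy' (C2 i x y z hx hy hz (fun u v => hc1 ⟨u, v⟩) hs2 he2xy')
        · exfalso
          have hxz : x ≠ z := by
            intro he
            have := hidx i (i+2) x hx (he ▸ hz)
            omega
          have himm₂ : Immorality E₂ x y z :=
            ⟨hxz, he2xy', he2zy', fun h2 => hs2 ((hsk x z).mpr h2)⟩
          obtain ⟨-, ha1, ha2, -⟩ := (him x y z).mpr himm₂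
          exact hc1 ⟨ha1, ha2⟩
    · intro hn2
      apply (hwin i x y z hx hy hz).2
      rintro ⟨ha1, ha2⟩
      have hnsxz : ¬ Skel E₁ x z := fun h => C1 i x y z hx hy hz ha1 ha2 h
      have hxz : x ≠ z := by
        intro he
        have := hidx i (i+2) x hx (he ▸ hz)
        omega
      obtain ⟨-, hb1, hb2, -⟩ := (him x y z).mp ⟨hxz, ha1, ha2, hnsxz⟩
      exact hn2 ⟨hb1, hb2⟩

end Main
end VP

/-- Verma–Pearl: two DAGs on the same vertex set are Markov equivalent iff they
have the same skeleton and the same immoralities. -/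
theorem markov_equiv_iff_skeleton_and_immoralities
    {V : Type*} [Fintype V] [DecidableEq V]
    (E₁ E₂ : V → V → Prop) (h₁ : IsAcyclicD E₁) (h₂ : IsAcyclicD E₂) :
    MarkovEquiv E₁ E₂ ↔
      ((∀ a b, Skel E₁ a b ↔ Skel E₂ a b) ∧
       (∀ a b c, Immorality E₁ a b c ↔ Immorality E₂ a b c)) := by
  constructor
  · intro me
    have hsk : ∀ a b, Skel E₁ a b ↔ Skel E₂ a b := fun a b =>
      ⟨VP.skel_imp h₁ h₂ me, VP.skel_imp h₂ h₁ (VP.markov_symm me)⟩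
    refine ⟨hsk, fun a b c => ⟨VP.imm_imp h₁ h₂ me hsk, ?_⟩⟩
    exact VP.imm_imp h₂ h₁ (VP.markov_symm me) (fun a b => (hsk a b).symm)
  · rintro ⟨hsk, him⟩ A B S _ _ _
    have hsk' : ∀ a b, Skel E₂ a b ↔ Skel E₁ a b := fun a b => (hsk a b).symm
    have him' : ∀ a b c, Immorality E₂ a b c ↔ Immorality E₁ a b c :=
      fun a b c => (him a b c).symm
    constructor
    · intro hd a ha b hb p htr
      rw [VP.blockedTrail_iff_not_act]
      intro hact
      obtain ⟨q, htr', hact'⟩ := VP.trans_main h₂ h₁ hsk' him' p a b htr hact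
      have := hd a ha b hb q htr'
      rw [VP.blockedTrail_iff_not_act] at this
      exact this hact'
    · intro hd a ha b hb p htr
      rw [VP.blockedTrail_iff_not_act]
      intro hact
      obtain ⟨q, htr', hact'⟩ := VP.trans_main h₁ h₂ hsk him p a b htr hact
      have := hd a ha b hb q htr'
      rw [VP.blockedTrail_iff_not_act] at this
      exact this hact'
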